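/- Let Z be an m×n real matrix with singular value decomposition Z = U diag(σ) V'. For λ ≥ 0, the matrix S_{λ,ℓ₁}(Z) := U diag((σ_1 − λ)_+, …, (σ_{min(m,n)} − λ)_+) V' (soft-thresholding of the singular values) is a minimizer over all m×n matrices X of (1/2)‖X − Z‖_F² + λ‖X‖_*, where ‖X‖_* = Σ_i σ_i(X) is the nuclear norm and (a)_+ = max{a, 0}. -/

import Mathlib

open Matrix

/-- Squared Frobenius norm of a real matrix. -/
noncomputable def frobSq {m n : ℕ} (A : Matrix (Fin m) (Fin n) ℝ) : ℝ :=
  ∑ i, ∑ j, (A i j) ^ 2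

/-- The nuclear norm `‖X‖_* = ∑_{i=1}^{min(m,n)} σ_i(X)`: the singular values of `X` are the
square roots of the eigenvalues of the smaller of the two Gram matrices `XᵀX`, `XXᵀ`. -/
noncomputable def nuclearNorm {m n : ℕ} (X : Matrix (Fin m) (Fin n) ℝ) : ℝ :=
  if n ≤ m then
    ∑ i : Fin n, Real.sqrt ((Matrix.isHermitian_conjTranspose_mul_self X).eigenvalues i)
  else
    ∑ i : Fin m, Real.sqrt ((Matrix.isHermitian_mul_conjTranspose_self X).eigenvalues i)

namespace SoftThreshAux

open Polynomial Finset

/-- Frobenius inner product as a double sum. -/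
noncomputable def ip {m n : ℕ} (A B : Matrix (Fin m) (Fin n) ℝ) : ℝ :=
  ∑ i, ∑ j, A i j * B i j

lemma ip_eq_trace {m n : ℕ} (A B : Matrix (Fin m) (Fin n) ℝ) :
    ip A B = trace (Aᵀ * B) := by
  rw [ip, Finset.sum_comm]
  simp [Matrix.trace, Matrix.mul_apply, Matrix.diag]

lemma frobSq_eq_ip {m n : ℕ} (A : Matrix (Fin m) (Fin n) ℝ) :
    frobSq A = ip A A := by
  simp [frobSq, ip, sq]

lemma frobSq_nonneg {m n : ℕ} (A : Matrix (Fin m) (Fin n) ℝ) : 0 ≤ frobSq A :=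
  Finset.sum_nonneg fun _ _ => Finset.sum_nonneg fun _ _ => sq_nonneg _

lemma frobSq_expand {m n : ℕ} (A B : Matrix (Fin m) (Fin n) ℝ) :
    frobSq (A + B) = frobSq A + 2 * ip A B + frobSq B := by
  unfold frobSq ip
  have h : ∀ i j, ((A + B) i j) ^ 2
      = A i j ^ 2 + 2 * (A i j * B i j) + B i j ^ 2 := by
    intro i j; simp [Matrix.add_apply]; ring
  simp_rw [h]
  simp [Finset.sum_add_distrib, Finset.mul_sum]

lemma ip_sub_left {m n : ℕ} (A B C : Matrix (Fin m) (Fin n) ℝ) :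
    ip (A - B) C = ip A C - ip B C := by
  simp [ip, Matrix.sub_apply, sub_mul, Finset.sum_sub_distrib]

lemma ip_neg_right {m n : ℕ} (A B : Matrix (Fin m) (Fin n) ℝ) :
    ip A (-B) = -ip A B := by
  simp [ip, Matrix.neg_apply, Finset.sum_neg_distrib]

lemma cs {ι : Type*} [Fintype ι] (f g : ι → ℝ) :
    ∑ i, f i * g i ≤ Real.sqrt (∑ i, f i ^ 2) * Real.sqrt (∑ i, g i ^ 2) := by
  have h := Finset.sum_mul_sq_le_sq_mul_sq Finset.univ f g
  calc ∑ i, f i * g i ≤ |∑ i, f i * g i| := le_abs_self _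
    _ = Real.sqrt ((∑ i, f i * g i) ^ 2) := (Real.sqrt_sq_eq_abs _).symm
    _ ≤ Real.sqrt ((∑ i, f i ^ 2) * ∑ i, g i ^ 2) := Real.sqrt_le_sqrt h
    _ = _ := Real.sqrt_mul (Finset.sum_nonneg fun i _ => sq_nonneg _) _

lemma trace_transpose_mul {m n : ℕ} (A B : Matrix (Fin m) (Fin n) ℝ) :
    trace (Aᵀ * B) = ∑ j, ∑ i, A i j * B i j := by
  simp [Matrix.trace, Matrix.mul_apply, Matrix.diag]

lemma diag_entry_conj {k l : ℕ} (Q : Matrix (Fin k) (Fin l) ℝ) (e : Fin k → ℝ) (i : Fin l) :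
    (Qᵀ * diagonal e * Q) i i = ∑ j, e j * (Q j i) ^ 2 := by
  simp [Matrix.mul_apply, Matrix.diagonal, Finset.mul_sum, sq]
  congr 1
  ext j
  ring

lemma col_sq_sum {k l : ℕ} (A : Matrix (Fin k) (Fin l) ℝ) (i : Fin l) :
    ∑ r, (A r i) ^ 2 = (Aᵀ * A) i i := by
  simp [Matrix.mul_apply, sq]

lemma charpoly_conj {k : ℕ} (W M : Matrix (Fin k) (Fin k) ℝ)
    (h1 : W * Wᵀ = 1) (h2 : Wᵀ * W = 1) :
    (W * M * Wᵀ).charpoly = M.charpoly := by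
  have hC : ∀ (A B : Matrix (Fin k) (Fin k) ℝ),
      (A * B).map (C : ℝ →+* ℝ[X]) = A.map (C : ℝ →+* ℝ[X]) * B.map (C : ℝ →+* ℝ[X]) :=
    fun A B => Matrix.map_mul
  have hC1 : (1 : Matrix (Fin k) (Fin k) ℝ).map (C : ℝ →+* ℝ[X]) = 1 :=
    Matrix.map_one _ (map_zero _) (map_one _)
  have key : charmatrix (W * M * Wᵀ) =
      W.map (C : ℝ →+* ℝ[X]) * charmatrix M * Wᵀ.map (C : ℝ →+* ℝ[X]) := by
    unfold charmatrix
    rw [RingHom.mapMatrix_apply, RingHom.mapMatrix_apply, mul_sub, sub_mul]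
    congr 1
    · rw [scalar_apply, ← smul_one_eq_diagonal, Matrix.mul_smul, Matrix.smul_mul, mul_one,
        ← hC, h1, hC1]
    · rw [← hC, ← hC]
  rw [Matrix.charpoly, key, det_mul, det_mul, Matrix.charpoly, mul_comm, ← mul_assoc, ← det_mul,
    ← hC, h2, hC1]
  simp

lemma charpoly_diag {k : ℕ} (c : Fin k → ℝ) :
    (diagonal c).charpoly = ∏ i, (X - C (c i)) := by
  rw [Matrix.charpoly_of_upperTriangular _ (Matrix.blockTriangular_diagonal c)]
  simp

lemma charpoly_hermitian {k : ℕ} {A : Matrix (Fin k) (Fin k) ℝ} (hA : A.IsHermitian) :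
    A.charpoly = ∏ i, (X - C (hA.eigenvalues i)) := by
  set P : Matrix (Fin k) (Fin k) ℝ := (hA.eigenvectorUnitary : Matrix (Fin k) (Fin k) ℝ) with hP
  have hmem := hA.eigenvectorUnitary.2
  have h1 : P * Pᵀ = 1 := by
    have := (Matrix.mem_unitaryGroup_iff.mp hmem)
    simpa [hP, Matrix.star_eq_conjTranspose,
      Matrix.conjTranspose_eq_transpose_of_trivial] using this
  have h2 : Pᵀ * P = 1 := by
    have := (Matrix.mem_unitaryGroup_iff'.mp hmem)
    simpa [hP, Matrix.star_eq_conjTranspose,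
      Matrix.conjTranspose_eq_transpose_of_trivial] using this
  have hsp : A = P * diagonal hA.eigenvalues * Pᵀ := by
    have := hA.spectral_theorem
    simpa [hP, Matrix.star_eq_conjTranspose, Matrix.conjTranspose_eq_transpose_of_trivial,
      RCLike.ofReal_real_eq_id] using this
  conv_lhs => rw [hsp]
  rw [charpoly_conj _ _ h1 h2, charpoly_diag]

lemma sum_f_eigenvalues {k : ℕ} {A : Matrix (Fin k) (Fin k) ℝ} (hA : A.IsHermitian)
    (W : Matrix (Fin k) (Fin k) ℝ) (c : Fin k → ℝ)
    (h1 : W * Wᵀ = 1) (h2 : Wᵀ * W = 1)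
    (hAeq : A = W * diagonal c * Wᵀ) (f : ℝ → ℝ) :
    ∑ i, f (hA.eigenvalues i) = ∑ i, f (c i) := by
  have hc1 : A.charpoly = ∏ i, (X - C (c i)) := by
    rw [hAeq, charpoly_conj _ _ h1 h2, charpoly_diag]
  have hc2 := charpoly_hermitian hA
  have hpoly : (∏ i, (X - C (hA.eigenvalues i))) = ∏ i, (X - C (c i)) := hc2.symm.trans hc1
  have hmult : (univ.val.map hA.eigenvalues) = univ.val.map c := by
    have h3 := congrArg Polynomial.roots hpoly
    have hmm : ∀ (e : Fin k → ℝ), (Multiset.map (fun i => X - C (e i)) univ.val)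
        = (univ.val.map e).map (fun a => X - C a) :=
      fun e => (Multiset.map_map (fun a => X - C a) e univ.val).symm
    rwa [Finset.prod_eq_multiset_prod, Finset.prod_eq_multiset_prod, hmm, hmm,
      Polynomial.roots_multiset_prod_X_sub_C, Polynomial.roots_multiset_prod_X_sub_C] at h3
  calc ∑ i, f (hA.eigenvalues i) = ((univ.val.map hA.eigenvalues).map f).sum := by
        rw [Multiset.map_map]; rfl
    _ = ((univ.val.map c).map f).sum := by rw [hmult]
    _ = ∑ i, f (c i) := by rw [Multiset.map_map]; rfl

lemma n_le_m {m n : ℕ} (U : Matrix (Fin m) (Fin n) ℝ) (hU : Uᵀ * U = 1) : n ≤ m := by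
  have hinj : Function.Injective U.mulVecLin := by
    intro v w h
    have : (Uᵀ * U).mulVec v = (Uᵀ * U).mulVec w := by
      rw [← Matrix.mulVec_mulVec, ← Matrix.mulVec_mulVec]
      simpa [Matrix.mulVecLin_apply] using congrArg Uᵀ.mulVec h
    simpa [hU] using this
  have := LinearMap.finrank_le_finrank_of_injective hinj
  simpa using this

lemma nuclearNorm_conj_diag {m n : ℕ} (hnm : n ≤ m)
    (U : Matrix (Fin m) (Fin n) ℝ) (V : Matrix (Fin n) (Fin n) ℝ)
    (hU : Uᵀ * U = 1) (hV : Vᵀ * V = 1) (d : Fin n → ℝ) (hd : ∀ i, 0 ≤ d i) :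
    nuclearNorm (U * diagonal d * Vᵀ) = ∑ i, d i := by
  set S : Matrix (Fin m) (Fin n) ℝ := U * diagonal d * Vᵀ with hS
  have hVVt : V * Vᵀ = 1 := mul_eq_one_comm.mp hV
  have hct : Sᴴ = Sᵀ := Matrix.conjTranspose_eq_transpose_of_trivial S
  have hStS : Sᴴ * S = V * diagonal (fun i => d i * d i) * Vᵀ := by
    rw [hct]
    have e : Sᵀ * S = V * ((diagonal d)ᵀ * ((Uᵀ * U) * (diagonal d * Vᵀ))) := by
      rw [hS]
      simp only [Matrix.transpose_mul, Matrix.transpose_transpose, Matrix.mul_assoc]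
    rw [e, hU, one_mul, Matrix.diagonal_transpose, ← Matrix.mul_assoc (diagonal d),
      Matrix.diagonal_mul_diagonal, ← Matrix.mul_assoc]
  have key := sum_f_eigenvalues (Matrix.isHermitian_conjTranspose_mul_self S) V
    (fun i => d i * d i) hVVt hV hStS Real.sqrt
  rw [nuclearNorm, if_pos hnm, key]
  refine Finset.sum_congr rfl fun i _ => ?_
  rw [← sq]
  exact Real.sqrt_sq (hd i)

lemma ip_conj {m n : ℕ} (U : Matrix (Fin m) (Fin n) ℝ) (V : Matrix (Fin n) (Fin n) ℝ)
    (hU : Uᵀ * U = 1) (hV : Vᵀ * V = 1) (A B : Matrix (Fin n) (Fin n) ℝ) :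
    ip (U * A * Vᵀ) (U * B * Vᵀ) = trace (Aᵀ * B) := by
  rw [ip_eq_trace]
  have e : (U * A * Vᵀ)ᵀ * (U * B * Vᵀ) = V * (Aᵀ * ((Uᵀ * U) * (B * Vᵀ))) := by
    simp only [Matrix.transpose_mul, Matrix.transpose_transpose, Matrix.mul_assoc]
  rw [e, hU, one_mul]
  have e2 : V * (Aᵀ * (B * Vᵀ)) = V * (Aᵀ * B) * Vᵀ := by
    simp only [Matrix.mul_assoc]
  rw [e2, Matrix.trace_mul_cycle, hV, one_mul]

lemma dual_bound {m n : ℕ} (hnm : n ≤ m) (lam : ℝ) (hlam : 0 ≤ lam)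
    (U : Matrix (Fin m) (Fin n) ℝ) (V : Matrix (Fin n) (Fin n) ℝ)
    (hU : Uᵀ * U = 1) (hV : Vᵀ * V = 1) (c : Fin n → ℝ)
    (hc0 : ∀ i, 0 ≤ c i) (hcl : ∀ i, c i ≤ lam)
    (X : Matrix (Fin m) (Fin n) ℝ) :
    trace ((U * diagonal c * Vᵀ)ᵀ * X) ≤ lam * nuclearNorm X := by
  classical
  set G : Matrix (Fin m) (Fin n) ℝ := U * diagonal c * Vᵀ with hG
  set hX := Matrix.isHermitian_conjTranspose_mul_self X with hhX
  set μ : Fin n → ℝ := hX.eigenvalues with hμ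
  set P : Matrix (Fin n) (Fin n) ℝ := (hX.eigenvectorUnitary : Matrix (Fin n) (Fin n) ℝ) with hP
  have hmem := hX.eigenvectorUnitary.2
  have hP1 : P * Pᵀ = 1 := by
    have := Matrix.mem_unitaryGroup_iff.mp hmem
    simpa [hP, Matrix.star_eq_conjTranspose, Matrix.conjTranspose_eq_transpose_of_trivial]
      using this
  have hP2 : Pᵀ * P = 1 := by
    have := Matrix.mem_unitaryGroup_iff'.mp hmem
    simpa [hP, Matrix.star_eq_conjTranspose, Matrix.conjTranspose_eq_transpose_of_trivial]
      using this
  have hct : Xᴴ = Xᵀ := Matrix.conjTranspose_eq_transpose_of_trivial X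
  have hspec : Pᵀ * (Xᵀ * X) * P = diagonal μ := by
    have := hX.conjStarAlgAut_star_eigenvectorUnitary
    simpa [hP, hct, Matrix.star_eq_conjTranspose, Matrix.conjTranspose_eq_transpose_of_trivial,
      RCLike.ofReal_real_eq_id, hμ] using this
  have hμ0 : ∀ i, 0 ≤ μ i := fun i => Matrix.eigenvalues_conjTranspose_mul_self_nonneg X i
  have hVVt : V * Vᵀ = 1 := mul_eq_one_comm.mp hV
  set Q : Matrix (Fin n) (Fin n) ℝ := Vᵀ * P with hQ
  have e1 : (G * P)ᵀ * (X * P) = Pᵀ * (Gᵀ * X) * P := by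
    rw [Matrix.transpose_mul]; simp only [Matrix.mul_assoc]
  have step1 : trace (Gᵀ * X) = trace ((G * P)ᵀ * (X * P)) := by
    rw [e1, Matrix.trace_mul_cycle, hP1, one_mul]
  have colX : ∀ i, ∑ r, ((X * P) r i) ^ 2 = μ i := by
    intro i
    have e2 : (X * P)ᵀ * (X * P) = Pᵀ * (Xᵀ * X) * P := by
      rw [Matrix.transpose_mul]; simp only [Matrix.mul_assoc]
    rw [col_sq_sum, e2, hspec, Matrix.diagonal_apply_eq]
  have hQsq : ∀ i, ∑ j, (Q j i) ^ 2 = 1 := by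
    intro i
    have e3 : Qᵀ * Q = Pᵀ * (V * Vᵀ) * P := by
      rw [hQ, Matrix.transpose_mul, Matrix.transpose_transpose]
      simp only [Matrix.mul_assoc]
    rw [col_sq_sum, e3, hVVt, Matrix.mul_one, hP2, Matrix.one_apply_eq]
  have hGtG : (G * P)ᵀ * (G * P) = Qᵀ * diagonal (fun j => c j * c j) * Q := by
    have expand : (G * P)ᵀ * (G * P)
        = Qᵀ * ((diagonal c)ᵀ * ((Uᵀ * U) * (diagonal c * Q))) := by
      rw [hG, hQ]
      simp only [Matrix.transpose_mul, Matrix.transpose_transpose, Matrix.mul_assoc]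
    rw [expand, hU, one_mul, Matrix.diagonal_transpose, ← Matrix.mul_assoc (diagonal c),
      Matrix.diagonal_mul_diagonal, ← Matrix.mul_assoc]
  have colG : ∀ i, ∑ r, ((G * P) r i) ^ 2 ≤ lam ^ 2 := by
    intro i
    rw [col_sq_sum, hGtG, diag_entry_conj]
    calc ∑ j, c j * c j * (Q j i) ^ 2 ≤ ∑ j, lam ^ 2 * (Q j i) ^ 2 := by
          refine Finset.sum_le_sum fun j _ => ?_
          have h1 : c j * c j ≤ lam ^ 2 := by nlinarith [hc0 j, hcl j]
          exact mul_le_mul_of_nonneg_right h1 (sq_nonneg _)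
      _ = lam ^ 2 := by rw [← Finset.mul_sum, hQsq, mul_one]
  have main : trace (Gᵀ * X) ≤ lam * ∑ i, Real.sqrt (μ i) := by
    rw [step1, trace_transpose_mul, Finset.mul_sum]
    refine Finset.sum_le_sum fun i _ => ?_
    calc ∑ r, (G * P) r i * (X * P) r i
        ≤ Real.sqrt (∑ r, ((G * P) r i) ^ 2) * Real.sqrt (∑ r, ((X * P) r i) ^ 2) := cs _ _
      _ ≤ lam * Real.sqrt (μ i) := by
          rw [colX i]
          refine mul_le_mul_of_nonneg_right ?_ (Real.sqrt_nonneg _)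
          calc Real.sqrt (∑ r, ((G * P) r i) ^ 2) ≤ Real.sqrt (lam ^ 2) :=
                Real.sqrt_le_sqrt (colG i)
            _ = lam := Real.sqrt_sq hlam
  rw [nuclearNorm, if_pos hnm]
  exact main

end SoftThreshAux

/-- Let `Z = U diag(σ) Vᵀ` be an SVD of the m×n matrix `Z`. For `λ ≥ 0`,
the soft-thresholded matrix `S_{λ,ℓ₁}(Z) = U diag((σᵢ − λ)₊) Vᵀ` minimizes
`½‖X − Z‖_F² + λ‖X‖_*` over all m×n matrices `X`. -/
theorem soft_thresholding_minimizes_nuclear_norm_objective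
    {m n : ℕ} (lam : ℝ) (hlam : 0 ≤ lam)
    (Z : Matrix (Fin m) (Fin n) ℝ)
    (U : Matrix (Fin m) (Fin n) ℝ) (V : Matrix (Fin n) (Fin n) ℝ) (σ : Fin n → ℝ)
    (hU : Uᵀ * U = 1) (hV : Vᵀ * V = 1)
    (hσ : ∀ i, 0 ≤ σ i) (hσord : ∀ i j : Fin n, i ≤ j → σ j ≤ σ i)
    (hZ : Z = U * Matrix.diagonal σ * Vᵀ) :
    ∀ X : Matrix (Fin m) (Fin n) ℝ,
      (1 / 2) * frobSq (U * Matrix.diagonal (fun i => max (σ i - lam) 0) * Vᵀ - Z) +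
        lam * nuclearNorm (U * Matrix.diagonal (fun i => max (σ i - lam) 0) * Vᵀ) ≤
      (1 / 2) * frobSq (X - Z) + lam * nuclearNorm X := by
  intro X
  open SoftThreshAux in
  classical
  have hnm : n ≤ m := SoftThreshAux.n_le_m U hU
  set d : Fin n → ℝ := fun i => max (σ i - lam) 0 with hd
  set c : Fin n → ℝ := fun i => min (σ i) lam with hc
  set S : Matrix (Fin m) (Fin n) ℝ := U * Matrix.diagonal d * Vᵀ with hS
  set G : Matrix (Fin m) (Fin n) ℝ := U * Matrix.diagonal c * Vᵀ with hG
  have hd0 : ∀ i, 0 ≤ d i := fun i => le_max_right _ _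
  have hc0 : ∀ i, 0 ≤ c i := fun i => le_min (hσ i) hlam
  have hcl : ∀ i, c i ≤ lam := fun i => min_le_right _ _
  have hdc : ∀ i, d i - σ i = -c i := by
    intro i
    rcases le_total (σ i) lam with h | h
    · simp [hd, hc, max_eq_right (by linarith : σ i - lam ≤ 0), min_eq_left h]
    · simp [hd, hc, max_eq_left (by linarith : (0:ℝ) ≤ σ i - lam), min_eq_right h]
  have hcd : ∀ i, d i * c i = lam * d i := by
    intro i
    rcases le_total (σ i) lam with h | h
    · simp [hd, hc, max_eq_right (by linarith : σ i - lam ≤ 0)]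
    · simp [hd, hc, min_eq_right h]
      ring
  -- S - Z = -G
  have hSZ : S - Z = -G := by
    rw [hS, hG, hZ, ← Matrix.sub_mul, ← Matrix.mul_sub, Matrix.diagonal_sub]
    have hdiag : (Matrix.diagonal fun i => d i - σ i) = -Matrix.diagonal c := by
      ext i j
      by_cases h : i = j
      · subst h; simp [hdc i]
      · simp [Matrix.diagonal_apply_ne _ h]
    rw [hdiag, Matrix.mul_neg, Matrix.neg_mul]
  -- nuclear norm of S
  have hNS : nuclearNorm S = ∑ i, d i :=
    SoftThreshAux.nuclearNorm_conj_diag hnm U V hU hV d hd0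
  -- ip S G = lam * nuclearNorm S
  have hipSG : SoftThreshAux.ip S G = lam * nuclearNorm S := by
    rw [hS, hG, SoftThreshAux.ip_conj U V hU hV, Matrix.diagonal_transpose,
      Matrix.diagonal_mul_diagonal, Matrix.trace_diagonal, hNS, Finset.mul_sum]
    exact Finset.sum_congr rfl fun i _ => hcd i
  -- ip X G ≤ lam * nuclearNorm X
  have hipXG : SoftThreshAux.ip X G ≤ lam * nuclearNorm X := by
    have h1 : SoftThreshAux.ip X G = SoftThreshAux.ip G X := by
      unfold SoftThreshAux.ip
      exact Finset.sum_congr rfl fun i _ => Finset.sum_congr rfl fun j _ => mul_comm _ _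
    rw [h1, SoftThreshAux.ip_eq_trace]
    exact SoftThreshAux.dual_bound hnm lam hlam U V hU hV c hc0 hcl X
  -- expansion
  have hfx : frobSq (X - Z) = frobSq (X - S) + 2 * SoftThreshAux.ip (X - S) (S - Z)
      + frobSq (S - Z) := by
    have hXZ : X - Z = (X - S) + (S - Z) := by abel
    rw [hXZ, SoftThreshAux.frobSq_expand]
  have hipmid : SoftThreshAux.ip (X - S) (S - Z)
      = SoftThreshAux.ip S G - SoftThreshAux.ip X G := by
    rw [hSZ, SoftThreshAux.ip_neg_right, SoftThreshAux.ip_sub_left]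
    ring
  have hfs : 0 ≤ frobSq (X - S) := SoftThreshAux.frobSq_nonneg _
  linarith [hfx, hipmid, hipSG, hipXG, hfs]
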